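/- Let B be a subalgebra of A_n (as a Heyting algebra, hence closed under 0, 1, ∧, ∨, →). Then every element a of B with a ≠ 1 is the join (in B, equivalently in A_n) of the atoms of B that lie below a. -/

import Mathlib

lemma aux_coe_sSup_mem (n : ℕ) (S : Set (WithTop (Set (Fin n))))
    (hbot : ⊥ ∈ S) (hsup : ∀ a ∈ S, ∀ b ∈ S, a ⊔ b ∈ S)
    (V : Set (Set (Fin n))) (hV : V.Finite)
    (hVS : ∀ u ∈ V, (↑u : WithTop (Set (Fin n))) ∈ S) :
    (↑(sSup V) : WithTop (Set (Fin n))) ∈ S := by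
  revert hVS
  refine Set.Finite.induction_on (motive := fun (V : Set (Set (Fin n))) _ =>
    (∀ u ∈ V, (↑u : WithTop (Set (Fin n))) ∈ S) → (↑(sSup V) : WithTop (Set (Fin n))) ∈ S)
    (s := V) hV (fun _ => by rw [sSup_empty, WithTop.coe_bot]; exact hbot) ?_
  intro x U hx hU ih hVS
  rw [sSup_insert, WithTop.coe_sup]
  exact hsup _ (hVS x (Set.mem_insert _ _)) _
    (ih fun y hy => hVS y (Set.mem_insert_of_mem _ hy))

theorem stmt_5 (n : ℕ)
    (hi : WithTop (Set (Fin n)) → WithTop (Set (Fin n)) → WithTop (Set (Fin n)))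
    (adj : ∀ a b c : WithTop (Set (Fin n)), c ⊓ a ≤ b ↔ c ≤ hi a b)
    (S : Set (WithTop (Set (Fin n))))
    (hbot : ⊥ ∈ S) (htop : ⊤ ∈ S)
    (hinf : ∀ a ∈ S, ∀ b ∈ S, a ⊓ b ∈ S)
    (hsup : ∀ a ∈ S, ∀ b ∈ S, a ⊔ b ∈ S)
    (hhi : ∀ a ∈ S, ∀ b ∈ S, hi a b ∈ S) :
    ∀ a ∈ S, a ≠ ⊤ →
      a = sSup {b | b ∈ S ∧ b ≠ ⊥ ∧ (∀ c ∈ S, c < b → c = ⊥) ∧ b ≤ a} := by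
  have : Finite (WithTop (Set (Fin n))) := inferInstanceAs (Finite (Option (Set (Fin n))))
  intro a haS haT
  obtain ⟨s, rfl⟩ := WithTop.ne_top_iff_exists.mp haT
  set T := {b | b ∈ S ∧ b ≠ ⊥ ∧ (∀ c ∈ S, c < b → c = ⊥) ∧ b ≤ (↑s : WithTop (Set (Fin n)))}
    with hTdef
  have htopT : ⊤ ∉ T := fun h => (WithTop.coe_ne_top (a := s)) (top_le_iff.mp h.2.2.2)
  set T' : Set (Set (Fin n)) := (fun u : Set (Fin n) => (↑u : WithTop (Set (Fin n)))) ⁻¹' T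
    with hT'def
  have hsSupT : sSup T = ↑(sSup T') := WithTop.sSup_eq htopT (OrderTop.bddAbove _)
  set j : Set (Fin n) := sSup T' with hjdef
  have hjS : (↑j : WithTop (Set (Fin n))) ∈ S :=
    aux_coe_sSup_mem n S hbot hsup T' (Set.toFinite T') (fun u hu => hu.1)
  have hjs : j ≤ s := sSup_le fun u hu => WithTop.coe_le_coe.mp hu.2.2.2
  rw [hsSupT]
  suffices hjeq : j = s by rw [hjeq]
  by_contra hne
  have hlt : j < s := lt_of_le_of_ne hjs hne
  obtain ⟨x, hxs, hxj⟩ := Set.exists_of_ssubset hlt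
  set d := (↑s : WithTop (Set (Fin n))) ⊓ hi (↑j) ⊥ with hd
  have hdS : d ∈ S := hinf _ haS _ (hhi _ hjS _ hbot)
  have h1 : (↑(s \ j) : WithTop (Set (Fin n))) ≤ hi (↑j) ⊥ := by
    rw [← adj, ← WithTop.coe_inf]
    have h0 : (s \ j) ⊓ j = (⊥ : Set (Fin n)) := by
      ext y; simp only [Set.inf_eq_inter, Set.mem_inter_iff, Set.mem_diff,
        Set.bot_eq_empty, Set.mem_empty_iff_false]; tauto
    rw [h0, WithTop.coe_bot]
  have h2 : (↑(s \ j) : WithTop (Set (Fin n))) ≤ d :=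
    le_inf (WithTop.coe_le_coe.mpr Set.diff_subset) h1
  have hdne : d ≠ ⊥ := by
    intro hdb
    rw [hdb, le_bot_iff, ← WithTop.coe_bot, WithTop.coe_inj] at h2
    have : x ∈ (⊥ : Set (Fin n)) := h2 ▸ (Set.mem_diff x).mpr ⟨hxs, hxj⟩
    simpa using this
  -- take a minimal nonzero element of S below d; it is an atom of S
  set U : Set (WithTop (Set (Fin n))) := {x | x ∈ S ∧ x ≠ ⊥ ∧ x ≤ d} with hU
  have hUne : U.Nonempty := ⟨d, hdS, hdne, le_rfl⟩
  obtain ⟨b, hbU, hbmin⟩ := wellFounded_lt.has_min U hUne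
  have hatom : ∀ c ∈ S, c < b → c = ⊥ := by
    intro c hcS hcb
    by_contra hcne
    exact hbmin c ⟨hcS, hcne, hcb.le.trans hbU.2.2⟩ hcb
  have hbd : b ≤ d := hbU.2.2
  have hbs : b ≤ (↑s : WithTop (Set (Fin n))) := hbd.trans inf_le_left
  have hbT : b ∈ T := ⟨hbU.1, hbU.2.1, hatom, hbs⟩
  have hbnt : b ≠ ⊤ := fun h => WithTop.coe_ne_top (a := s) (top_le_iff.mp (h ▸ hbs))
  obtain ⟨u, rfl⟩ := WithTop.ne_top_iff_exists.mp hbnt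
  have huT' : u ∈ T' := hbT
  have hble : (↑u : WithTop (Set (Fin n))) ≤ ↑j := WithTop.coe_le_coe.mpr (le_sSup huT')
  have hbbot : (↑u : WithTop (Set (Fin n))) ⊓ ↑j ≤ ⊥ :=
    (adj _ _ _).mpr (hbd.trans inf_le_right)
  have : (↑u : WithTop (Set (Fin n))) = ⊥ :=
    le_bot_iff.mp (by simpa [inf_eq_left.mpr hble] using hbbot)
  exact hbU.2.1 this
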